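/- Fix n ≥ 2 and k ≥ 2. Let D be any 2^n × 2^n diagonal unitary matrix belonging to level C_k of the n-qubit Clifford hierarchy, let H^(n) denote the Hadamard gate acting on qubit n only, and set ψ = S(n) · H^(n) · D · H^{⊗n} |0⟩^{⊗n}. For g = (g_1,…,g_n) ∈ {0,1}^n define U_g = (Z^{(1)}Z^{(2)})^{g_1} (Z^{(2)}Z^{(3)})^{g_2} ⋯ (Z^{(n−1)}Z^{(n)})^{g_{n−1}} (X^{⊗n})^{g_n}, and define the measurement unitary M_ψ = Σ_{g∈{0,1}^n} U_g |ψ⟩⟨g|, where {|g⟩} is the computational basis. Then M_ψ belongs to level C_k of the n-qubit Clifford hierarchy. -/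

import Mathlib

open Matrix Complex

noncomputable section

/-- `n`-qubit operators: matrices indexed by bit strings (qubit `j` ↔ index `j`,
qubit 1 most significant corresponds to index `0`). -/
abbrev QMat (n : ℕ) := Matrix (Fin n → Fin 2) (Fin n → Fin 2) ℂ
/-- `n`-qubit state vectors. -/
abbrev QVec (n : ℕ) := (Fin n → Fin 2) → ℂ

def Xg : Matrix (Fin 2) (Fin 2) ℂ := !![0, 1; 1, 0]
def Yg : Matrix (Fin 2) (Fin 2) ℂ := !![0, -Complex.I; Complex.I, 0]
def Zg : Matrix (Fin 2) (Fin 2) ℂ := !![1, 0; 0, -1]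
def Hg : Matrix (Fin 2) (Fin 2) ℂ := (((Real.sqrt 2)⁻¹ : ℝ) : ℂ) • !![1, 1; 1, -1]

/-- Kronecker product of a family of single-qubit operators. -/
def kronFam (n : ℕ) (A : Fin n → Matrix (Fin 2) (Fin 2) ℂ) : QMat n :=
  fun v w => ∏ j, A j (v j) (w j)

/-- The single-qubit operator `A` acting on qubit `i` (identity elsewhere). -/
def onQubit (n : ℕ) (A : Matrix (Fin 2) (Fin 2) ℂ) (i : Fin n) : QMat n :=
  kronFam n (fun j => if j = i then A else 1)

/-- Controlled-NOT with control qubit `c` and target qubit `t`. -/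
def CNOT (n : ℕ) (c t : Fin n) : QMat n :=
  fun v w => if v = Function.update w t (w t + w c) then 1 else 0

/-- `S(n) = CNOT_{2→1} CNOT_{3→2} ⋯ CNOT_{n→n−1}` (0-based indices). -/
def Sn (n : ℕ) : QMat n :=
  ((List.finRange (n - 1)).map (fun j =>
    CNOT n ⟨j.1 + 1, by have := j.isLt; omega⟩ ⟨j.1, by have := j.isLt; omega⟩)).prod

/-- Computational basis vector `|g⟩`. -/
def ket (n : ℕ) (g : Fin n → Fin 2) : QVec n := fun v => if v = g then 1 else 0

/-- Inner product (conjugate-linear in the first argument). -/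
def qip {n : ℕ} (v w : QVec n) : ℂ := ∑ x, star (v x) * w x

/-- The generator `Z^{(j)} Z^{(j+1)}` (0-based `j`). -/
def ZZ (n : ℕ) (j : Fin (n - 1)) : QMat n :=
  onQubit n Zg ⟨j.1, by have := j.isLt; omega⟩ *
    onQubit n Zg ⟨j.1 + 1, by have := j.isLt; omega⟩

/-- `X^{⊗n}`. -/
def XXn (n : ℕ) : QMat n := kronFam n (fun _ => Xg)

/-- `U_g = (Z⁽¹⁾Z⁽²⁾)^{g₁} ⋯ (Z⁽ⁿ⁻¹⁾Z⁽ⁿ⁾)^{g_{n−1}} (X^{⊗n})^{g_n}`. -/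
def Ug (n : ℕ) (hn : 0 < n) (g : Fin n → Fin 2) : QMat n :=
  ((List.finRange (n - 1)).map (fun j =>
    ZZ n j ^ ((g (Fin.castLE (Nat.sub_le n 1) j)).val))).prod *
    XXn n ^ ((g ⟨n - 1, by omega⟩).val)

/-- The group `G⁽ⁿ⁾_tetra` generated by the `Z⁽ⁱ⁾Z⁽ⁱ⁺¹⁾` and `X^{⊗n}`
(all generators are involutions, so the multiplicative closure is a group). -/
def Gtetra (n : ℕ) : Submonoid (QMat n) :=
  Submonoid.closure ({ M | ∃ j : Fin (n - 1), M = ZZ n j } ∪ {XXn n})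

/-- `n`-fold Kronecker products of `I, X, Y, Z`. -/
def PauliSet (n : ℕ) : Set (QMat n) :=
  { M | ∃ A : Fin n → Matrix (Fin 2) (Fin 2) ℂ,
      (∀ j, A j = 1 ∨ A j = Xg ∨ A j = Yg ∨ A j = Zg) ∧ M = kronFam n A }

/-- The `n`-qubit Pauli group (every element has finite order, so the
multiplicative closure coincides with the generated group of unitaries). -/
def PauliGroup (n : ℕ) : Submonoid (QMat n) := Submonoid.closure (PauliSet n)

/-- Level `k` of the Clifford hierarchy: `C_1` is the Pauli group and
`C_{k+1} = { unitary U | ∀ P ∈ P_n, U P U† ∈ C_k }`. -/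
def Clifford (n : ℕ) : ℕ → Set (QMat n)
  | 0 => (PauliGroup n : Set (QMat n))
  | 1 => (PauliGroup n : Set (QMat n))
  | (k + 2) => { U | U ∈ Matrix.unitaryGroup (Fin n → Fin 2) ℂ ∧
      ∀ P ∈ PauliGroup n, U * P * Uᴴ ∈ Clifford n (k + 1) }

end

noncomputable section Aux
open Matrix Complex

variable {n : ℕ}

/-- basic: product of kron families -/
theorem kron_mul (A B : Fin n → Matrix (Fin 2) (Fin 2) ℂ) :
    kronFam n A * kronFam n B = kronFam n (fun j => A j * B j) := by
  ext v w
  simp only [Matrix.mul_apply, kronFam]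
  simp_rw [← Finset.prod_mul_distrib]
  conv_rhs => rw [Finset.prod_univ_sum]
  rw [← Fintype.piFinset_univ]

theorem kron_one : kronFam n (fun _ => (1 : Matrix (Fin 2) (Fin 2) ℂ)) = 1 := by
  ext v w
  by_cases h : v = w
  · subst h
    simp [kronFam, Matrix.one_apply]
  · obtain ⟨j, hj⟩ : ∃ j, v j ≠ w j := by
      by_contra hc; push_neg at hc; exact h (funext hc)
    simp only [kronFam, Matrix.one_apply, if_neg h]
    exact Finset.prod_eq_zero (Finset.mem_univ j) (by simp [Matrix.one_apply, hj])

theorem kron_conjT (A : Fin n → Matrix (Fin 2) (Fin 2) ℂ) :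
    (kronFam n A)ᴴ = kronFam n (fun j => (A j)ᴴ) := by
  ext v w
  simp [kronFam, Matrix.conjTranspose_apply]

theorem kron_smul (c : Fin n → ℂ) (A : Fin n → Matrix (Fin 2) (Fin 2) ℂ) :
    kronFam n (fun j => c j • A j) = (∏ j, c j) • kronFam n A := by
  ext v w
  simp [kronFam, Finset.prod_mul_distrib]

end Aux
section Aux2
open Matrix Complex

variable {n : ℕ}

/-- the bit-flip map implemented by `CNOT n c t`. -/
def Tr (n : ℕ) (c t : Fin n) (w : Fin n → Fin 2) : Fin n → Fin 2 :=
  Function.update w t (w t + w c)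

/-- X-type Pauli mask matrix. -/
def Pmask (n : ℕ) (s : Fin n → Fin 2) : QMat n :=
  fun v w => if v = w + s then 1 else 0

/-- sign character. -/
def chi (n : ℕ) (b v : Fin n → Fin 2) : ℂ := ∏ j, (-1 : ℂ) ^ ((b j * v j : Fin 2)).val

/-- Z-type Pauli diagonal matrix. -/
def Zdiag (n : ℕ) (b : Fin n → Fin 2) : QMat n := Matrix.diagonal (chi n b)

theorem fin2_add_add : ∀ a b : Fin 2, a + b + b = a := by decide

theorem cnot_apply (c t : Fin n) (v w : Fin n → Fin 2) :
    CNOT n c t v w = if v = Tr n c t w then 1 else 0 := rfl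

theorem Tr_invol (c t : Fin n) (hct : c ≠ t) (w : Fin n → Fin 2) :
    Tr n c t (Tr n c t w) = w := by
  funext j
  simp only [Tr, Function.update_apply]
  by_cases hj : j = t
  · subst hj
    simp [if_neg hct, fin2_add_add]
  · simp [hj]

theorem Tr_eq_iff (c t : Fin n) (hct : c ≠ t) (v w : Fin n → Fin 2) :
    v = Tr n c t w ↔ w = Tr n c t v := by
  constructor <;> intro h <;> subst h <;> rw [Tr_invol c t hct]

theorem Tr_add (c t : Fin n) (v s : Fin n → Fin 2) :
    Tr n c t (v + s) = Tr n c t v + Tr n c t s := by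
  funext j
  simp only [Tr, Function.update_apply, Pi.add_apply]
  by_cases hj : j = t
  · subst hj; simp; ac_rfl
  · simp [hj]

theorem add_eq_iff (v w s : Fin n → Fin 2) : v = w + s ↔ w = v + s := by
  constructor <;> intro h <;> subst h <;> funext j <;>
    simp [Pi.add_apply, fin2_add_add]

/-- diagonal via CNOT -/
theorem diag_mul_cnot (c t : Fin n) (f : (Fin n → Fin 2) → ℂ) :
    Matrix.diagonal f * CNOT n c t = CNOT n c t * Matrix.diagonal (f ∘ Tr n c t) := by
  ext v w
  rw [Matrix.diagonal_mul, Matrix.mul_diagonal, cnot_apply]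
  by_cases h : v = Tr n c t w
  · subst h; simp
  · simp [h]

/-- Pmask via CNOT -/
theorem pmask_mul_cnot (c t : Fin n) (hct : c ≠ t) (s : Fin n → Fin 2) :
    Pmask n s * CNOT n c t = CNOT n c t * Pmask n (Tr n c t s) := by
  ext v w
  rw [Matrix.mul_apply, Matrix.mul_apply]
  have h1 : ∀ x : Fin n → Fin 2, (v = x + s) ↔ (x = v + s) := fun x => add_eq_iff v x s
  have h2 : ∀ x : Fin n → Fin 2, (v = Tr n c t x) ↔ (x = Tr n c t v) := fun x =>
    Tr_eq_iff c t hct v x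
  simp only [Pmask, cnot_apply]
  simp_rw [h1, h2, ite_mul, one_mul, zero_mul, Finset.sum_ite_eq', Finset.mem_univ, if_true]
  have key : (v + s = Tr n c t w) ↔ (Tr n c t v = w + Tr n c t s) := by
    constructor
    · intro h
      have h3 : Tr n c t (v + s) = w := by rw [h, Tr_invol c t hct]
      rw [Tr_add] at h3
      exact (add_eq_iff _ _ _).mpr h3.symm
    · intro h
      have h3 : w = Tr n c t v + Tr n c t s := (add_eq_iff _ _ _).mp h
      rw [← Tr_add] at h3
      rw [h3, Tr_invol c t hct]
  by_cases h : v + s = Tr n c t w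
  · rw [if_pos h, if_pos (key.mp h)]
  · rw [if_neg h, if_neg (fun hc => h (key.mpr hc))]
end Aux2
section Aux3
open Matrix Complex

variable {n : ℕ}

theorem prod_ite_one (p : Fin n → Prop) [DecidablePred p] :
    (∏ j, if p j then (1 : ℂ) else 0) = if ∀ j, p j then 1 else 0 := by
  by_cases h : ∀ j, p j
  · rw [if_pos h]; simp [h]
  · rw [if_neg h]
    push_neg at h
    obtain ⟨j, hj⟩ := h
    exact Finset.prod_eq_zero (Finset.mem_univ j) (by simp [hj])

theorem Xpow_apply : ∀ a p q : Fin 2, (Xg ^ (a : Fin 2).val) p q = if p = q + a then 1 else 0 := by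
  intro a p q
  fin_cases a <;> fin_cases p <;> fin_cases q <;> simp [Xg, pow_one]

theorem Zpow_apply : ∀ b p q : Fin 2,
    (Zg ^ (b : Fin 2).val) p q = if p = q then ((-1 : ℂ)) ^ ((b * p : Fin 2)).val else 0 := by
  intro b p q
  fin_cases b <;> fin_cases p <;> fin_cases q <;> simp [Zg, pow_one, Matrix.one_apply]

theorem kron_X (a : Fin n → Fin 2) :
    kronFam n (fun j => Xg ^ ((a j) : Fin 2).val) = Pmask n a := by
  ext v w
  simp only [kronFam, Pmask, Xpow_apply]
  rw [prod_ite_one]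
  congr 1
  simp only [eq_iff_iff]
  constructor
  · intro h; funext j; exact h j
  · intro h j; rw [h]; rfl

theorem kron_Z (b : Fin n → Fin 2) :
    kronFam n (fun j => Zg ^ ((b j) : Fin 2).val) = Zdiag n b := by
  ext v w
  simp only [kronFam, Zdiag, Zpow_apply]
  by_cases h : v = w
  · subst h
    simp [Matrix.diagonal_apply_eq, chi]
  · rw [Matrix.diagonal_apply_ne _ h]
    obtain ⟨j, hj⟩ : ∃ j, v j ≠ w j := by
      by_contra hc; push_neg at hc; exact h (funext hc)
    exact Finset.prod_eq_zero (Finset.mem_univ j) (by simp [hj])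

theorem cnot_conjT (c t : Fin n) (hct : c ≠ t) : (CNOT n c t)ᴴ = CNOT n c t := by
  ext v w
  rw [Matrix.conjTranspose_apply, cnot_apply, cnot_apply]
  by_cases h : v = Tr n c t w
  · rw [if_pos ((Tr_eq_iff c t hct v w).mp h), if_pos h]
    exact star_one ℂ
  · have h' : ¬ w = Tr n c t v := fun hc => h ((Tr_eq_iff c t hct v w).mpr hc)
    rw [if_neg h', if_neg h]
    exact star_zero ℂ

theorem cnot_mul_cnot (c t : Fin n) (hct : c ≠ t) : CNOT n c t * CNOT n c t = 1 := by
  ext v w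
  rw [Matrix.mul_apply]
  simp only [cnot_apply]
  have h2 : ∀ x : Fin n → Fin 2, (v = Tr n c t x) ↔ (x = Tr n c t v) := fun x =>
    Tr_eq_iff c t hct v x
  simp_rw [h2, ite_mul, one_mul, zero_mul, Finset.sum_ite_eq', Finset.mem_univ, if_true]
  have key : (Tr n c t v = Tr n c t w) ↔ v = w :=
    ⟨fun hc => by rw [← Tr_invol c t hct v, hc, Tr_invol c t hct],
     fun hc => by rw [hc]⟩
  simp only [key, Matrix.one_apply]

theorem prod_split_two (t c : Fin n) (htc : t ≠ c) (f g : Fin n → ℂ)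
    (hrest : ∀ j, j ≠ t → j ≠ c → f j = g j) (hpair : f t * f c = g t * g c) :
    ∏ j, f j = ∏ j, g j := by
  have hc : c ∈ Finset.univ.erase t := Finset.mem_erase.mpr ⟨fun h => htc h.symm, Finset.mem_univ c⟩
  have e1 : ∀ h : Fin n → ℂ, ∏ j, h j = (((Finset.univ.erase t).erase c).prod h * h c) * h t := by
    intro h
    rw [Finset.prod_erase_mul _ _ hc, Finset.prod_erase_mul _ _ (Finset.mem_univ t)]
  rw [e1 f, e1 g, mul_assoc, mul_assoc, mul_comm (f c), mul_comm (g c), hpair]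
  congr 1
  refine Finset.prod_congr rfl (fun j hj => ?_)
  simp only [Finset.mem_erase] at hj
  exact hrest j hj.2.1 hj.1

theorem neg_one_pow_pair : ∀ bt bc vt vc : Fin 2,
    ((-1 : ℂ)) ^ ((bt * (vt + vc) : Fin 2)).val * ((-1 : ℂ)) ^ ((bc * vc : Fin 2)).val =
    ((-1 : ℂ)) ^ ((bt * vt : Fin 2)).val * ((-1 : ℂ)) ^ (((bc + bt) * vc : Fin 2)).val := by
  intro bt bc vt vc
  fin_cases bt <;> fin_cases bc <;> fin_cases vt <;> fin_cases vc <;>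
    norm_num [show ((2 : Fin 2)).val = 0 from rfl, show ((1 + 1 : Fin 2)).val = 0 from rfl]

theorem chi_Tr (c t : Fin n) (hct : c ≠ t) (b v : Fin n → Fin 2) :
    chi n b (Tr n c t v) = chi n (Tr n t c b) v := by
  unfold chi
  refine prod_split_two t c (fun h => hct h.symm) _ _ (fun j hjt hjc => ?_) ?_
  · have e1 : Tr n c t v j = v j := by simp [Tr, Function.update_apply, hjt]
    have e2 : Tr n t c b j = b j := by simp [Tr, Function.update_apply, hjc]
    rw [e1, e2]
  · have h1 : Tr n c t v t = v t + v c := by simp [Tr]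
    have h2 : Tr n c t v c = v c := by
      simp [Tr, Function.update_apply, if_neg hct]
    have h3 : Tr n t c b t = b t := by
      simp [Tr, Function.update_apply, if_neg (fun h : (t : Fin n) = c => hct h.symm)]
    have h4 : Tr n t c b c = b c + b t := by simp [Tr]
    rw [h1, h2, h3, h4]
    exact neg_one_pow_pair (b t) (b c) (v t) (v c)

theorem zdiag_mul_cnot (c t : Fin n) (hct : c ≠ t) (b : Fin n → Fin 2) :
    Zdiag n b * CNOT n c t = CNOT n c t * Zdiag n (Tr n t c b) := by
  unfold Zdiag
  have hfe : chi n b ∘ Tr n c t = chi n (Tr n t c b) := funext (chi_Tr c t hct b)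
  rw [diag_mul_cnot, hfe]

theorem cnot_conj_zdiag (c t : Fin n) (hct : c ≠ t) (b : Fin n → Fin 2) :
    CNOT n c t * Zdiag n b * CNOT n c t = Zdiag n (Tr n t c b) := by
  have h := zdiag_mul_cnot c t hct (Tr n t c b)
  rw [Tr_invol t c (fun h => hct h.symm)] at h
  rw [← h, mul_assoc, cnot_mul_cnot c t hct, mul_one]

theorem cnot_conj_pmask (c t : Fin n) (hct : c ≠ t) (s : Fin n → Fin 2) :
    CNOT n c t * Pmask n s * CNOT n c t = Pmask n (Tr n c t s) := by
  rw [mul_assoc, pmask_mul_cnot c t hct s, ← mul_assoc, cnot_mul_cnot c t hct, one_mul]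

end Aux3
section Aux4
open Matrix Complex

variable {n : ℕ}

theorem finRange_push : ∀ (m : ℕ) (F : Fin m → QMat n) (A : ℕ → QMat n),
    (∀ i : Fin m, A i.val * F i = F i * A (i.val + 1)) →
    A 0 * ((List.finRange m).map F).prod = ((List.finRange m).map F).prod * A m
  | 0, F, A, h => by simp
  | (m+1), F, A, h => by
      have ih : A 1 * (List.map (F ∘ Fin.succ) (List.finRange m)).prod =
          (List.map (F ∘ Fin.succ) (List.finRange m)).prod * A (m + 1) :=
        finRange_push m (F ∘ Fin.succ) (fun i => A (i + 1)) (fun i => h i.succ)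
      have h0 : A 0 * F 0 = F 0 * A 1 := h 0
      rw [List.finRange_succ, List.map_cons, List.map_map, List.prod_cons]
      rw [← mul_assoc, h0, mul_assoc, ih, ← mul_assoc]

theorem prod_comm_push {ι : Type*} (S : QMat n) (F G : ι → QMat n) :
    ∀ (L : List ι), (∀ i ∈ L, F i * S = S * G i) →
    (L.map F).prod * S = S * (L.map G).prod
  | [], _ => by simp
  | (a :: L), h => by
      have ih := prod_comm_push S F G L (fun i hi => h i (List.mem_cons_of_mem a hi))
      rw [List.map_cons, List.map_cons, List.prod_cons, List.prod_cons,
        mul_assoc, ih, ← mul_assoc, h a List.mem_cons_self, mul_assoc]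

theorem pow_push (A B S : QMat n) (h : A * S = S * B) : ∀ e : ℕ, A ^ e * S = S * B ^ e
  | 0 => by simp
  | (e+1) => by
      rw [pow_succ, pow_succ, mul_assoc, h, ← mul_assoc, pow_push A B S h e, mul_assoc]

theorem prod_diag {ι : Type*} (f : ι → (Fin n → Fin 2) → ℂ) :
    ∀ L : List ι, (L.map (fun i => Matrix.diagonal (f i))).prod =
      Matrix.diagonal (fun v => (L.map (fun i => f i v)).prod)
  | [] => by
      simp only [List.map_nil, List.prod_nil]
      exact (Matrix.diagonal_one).symm
  | (a :: L) => by
      rw [List.map_cons, List.prod_cons, prod_diag f L, Matrix.diagonal_mul_diagonal]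
      exact congrArg Matrix.diagonal (funext fun v => by
        rw [List.map_cons, List.prod_cons])

/-- the `i`-th CNOT gate in `S(n)`. -/
def gate (n : ℕ) (i : Fin (n - 1)) : QMat n :=
  CNOT n ⟨i.1 + 1, by have := i.isLt; omega⟩ ⟨i.1, by have := i.isLt; omega⟩

theorem Sn_eq : Sn n = ((List.finRange (n - 1)).map (gate n)).prod := rfl

theorem gate_ne (i : Fin (n - 1)) :
    (⟨i.1 + 1, by have := i.isLt; omega⟩ : Fin n) ≠ ⟨i.1, by have := i.isLt; omega⟩ := by
  intro h
  have := congrArg Fin.val h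
  simp at this

theorem chi_add (b b' v : Fin n → Fin 2) :
    chi n b v * chi n b' v = chi n (b + b') v := by
  unfold chi
  rw [← Finset.prod_mul_distrib]
  refine Finset.prod_congr rfl (fun j _ => ?_)
  have : ∀ a b c : Fin 2, ((-1 : ℂ)) ^ ((a * c : Fin 2)).val * ((-1 : ℂ)) ^ ((b * c : Fin 2)).val
      = ((-1 : ℂ)) ^ (((a + b) * c : Fin 2)).val := by
    intro a b c
    fin_cases a <;> fin_cases b <;> fin_cases c <;>
      norm_num [show ((2 : Fin 2)).val = 0 from rfl, show ((1 + 1 : Fin 2)).val = 0 from rfl]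
  exact this (b j) (b' j) (v j)

theorem Zdiag_mul (b b' : Fin n → Fin 2) :
    Zdiag n b * Zdiag n b' = Zdiag n (b + b') := by
  unfold Zdiag
  rw [Matrix.diagonal_mul_diagonal]
  exact congrArg Matrix.diagonal (funext fun v => chi_add b b' v)

theorem onQubit_Z_eq (i : Fin n) :
    onQubit n Zg i = Zdiag n (fun q => if q = i then 1 else 0) := by
  rw [← kron_Z]
  unfold onQubit kronFam
  funext v w
  refine Finset.prod_congr rfl (fun j _ => ?_)
  by_cases h : j = i <;> simp [h, pow_one]

theorem onQubit_X_eq (i : Fin n) :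
    onQubit n Xg i = Pmask n (fun q => if q = i then 1 else 0) := by
  rw [← kron_X]
  unfold onQubit kronFam
  funext v w
  refine Finset.prod_congr rfl (fun j _ => ?_)
  by_cases h : j = i <;> simp [h, pow_one]

theorem XXn_eq : XXn n = Pmask n (fun _ => 1) := by
  rw [← kron_X]
  unfold XXn kronFam
  funext v w
  refine Finset.prod_congr rfl (fun j _ => ?_)
  simp [pow_one]

/-- the mask of `ZZ n j`. -/
def mzz (n : ℕ) (j : Fin (n - 1)) : Fin n → Fin 2 :=
  fun q => if q.val = j.val ∨ q.val = j.val + 1 then 1 else 0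

theorem ZZ_eq (j : Fin (n - 1)) : ZZ n j = Zdiag n (mzz n j) := by
  unfold ZZ
  rw [onQubit_Z_eq, onQubit_Z_eq, Zdiag_mul]
  refine congrArg (Zdiag n) (funext fun q => ?_)
  have hj := j.isLt
  simp only [Pi.add_apply, mzz, Fin.ext_iff]
  by_cases h1 : (q : Fin n).val = j.val
  · have h2 : ¬ ((q : Fin n).val = j.val + 1) := by omega
    simp [h1, h2]
  · by_cases h2 : (q : Fin n).val = j.val + 1
    · simp [h1, h2]
    · simp [h1, h2]

end Aux4
section Aux5
open Matrix Complex

variable {n : ℕ}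

/-- the evolving `Z`-mask while pushing `ZZ j` through `S(n)`. -/
def zzmask (n : ℕ) (j : Fin (n - 1)) (i : ℕ) : Fin n → Fin 2 :=
  if i ≤ j.val then mzz n j else (fun q => if q.val = j.val then 1 else 0)

theorem sgl_eq (i : Fin n) :
    (fun q => if q = i then (1 : Fin 2) else 0) = (fun q : Fin n => if q.val = i.val then 1 else 0) := by
  funext q
  simp [Fin.ext_iff]

theorem ZZ_push (j : Fin (n - 1)) :
    ZZ n j * Sn n = Sn n * onQubit n Zg ⟨j.val, by have := j.isLt; omega⟩ := by
  have hj := j.isLt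
  have key := finRange_push (n - 1) (gate n) (fun i => Zdiag n (zzmask n j i)) ?_
  · rw [ZZ_eq, onQubit_Z_eq, Sn_eq]
    have h0 : zzmask n j 0 = mzz n j := by unfold zzmask; rw [if_pos (Nat.zero_le _)]
    have h1 : zzmask n j (n - 1) = fun q => if q.val = j.val then 1 else 0 := by
      unfold zzmask; rw [if_neg (by omega)]
    rw [sgl_eq, ← h0, ← h1]
    exact key
  · intro i
    have hi := i.isLt
    show Zdiag n (zzmask n j i.val) * gate n i = gate n i * Zdiag n (zzmask n j (i.val + 1))
    unfold gate
    rw [zdiag_mul_cnot _ _ (gate_ne i)]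
    refine congrArg _ (congrArg (Zdiag n) ?_)
    show Function.update (zzmask n j i.val) ⟨i.1 + 1, _⟩
        (zzmask n j i.val ⟨i.1 + 1, _⟩ + zzmask n j i.val ⟨i.1, _⟩) = zzmask n j (i.val + 1)
    rcases Nat.lt_trichotomy i.val j.val with hlt | heq | hgt
    · have e1 : zzmask n j i.val = mzz n j := by unfold zzmask; rw [if_pos (by omega)]
      have e2 : zzmask n j (i.val + 1) = mzz n j := by unfold zzmask; rw [if_pos (by omega)]
      rw [e1, e2]
      have ht : mzz n j ⟨i.1, by omega⟩ = 0 := by unfold mzz; simp; omega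
      rw [ht, add_zero]
      exact Function.update_eq_self _ _
    · have e1 : zzmask n j i.val = mzz n j := by unfold zzmask; rw [if_pos (by omega)]
      have e2 : zzmask n j (i.val + 1) = fun q : Fin n => if q.val = j.val then 1 else 0 := by
        unfold zzmask; rw [if_neg (by omega)]
      rw [e1, e2]
      funext q
      rw [Function.update_apply]
      by_cases hq : q = (⟨i.1 + 1, by omega⟩ : Fin n)
      · have hqv : q.val = i.val + 1 := by rw [hq]
        rw [if_pos hq]
        have v1 : mzz n j ⟨i.1 + 1, by omega⟩ = 1 := by unfold mzz; simp; omega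
        have v2 : mzz n j ⟨i.1, by omega⟩ = 1 := by unfold mzz; simp [heq]
        rw [v1, v2, if_neg (by omega)]
        decide
      · rw [if_neg hq]
        have hqv : q.val ≠ i.val + 1 := fun hc => hq (Fin.ext hc)
        unfold mzz
        by_cases h1 : q.val = j.val
        · rw [if_pos (Or.inl h1), if_pos h1]
        · rw [if_neg (by omega), if_neg h1]
    · have e1 : zzmask n j i.val = fun q : Fin n => if q.val = j.val then 1 else 0 := by
        unfold zzmask; rw [if_neg (by omega)]
      have e2 : zzmask n j (i.val + 1) = fun q : Fin n => if q.val = j.val then 1 else 0 := by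
        unfold zzmask; rw [if_neg (by omega)]
      rw [e1, e2]
      have ht : (if ((⟨i.1, by omega⟩ : Fin n)).val = j.val then (1 : Fin 2) else 0) = 0 := by
        simp; omega
      simp only [ht, add_zero]
      exact Function.update_eq_self _ _

/-- the evolving `X`-mask while pushing `X^{⊗n}` through `S(n)`. -/
def xmask (n : ℕ) (i : ℕ) : Fin n → Fin 2 := fun q => if i ≤ q.val then 1 else 0

theorem XX_push (hn : 1 ≤ n) :
    XXn n * Sn n = Sn n * onQubit n Xg ⟨n - 1, by omega⟩ := by
  have key := finRange_push (n - 1) (gate n) (fun i => Pmask n (xmask n i)) ?_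
  · rw [XXn_eq, onQubit_X_eq, Sn_eq]
    have h0 : xmask n 0 = fun _ => 1 := by funext q; simp [xmask]
    have h1 : xmask n (n - 1) = fun q => if q = (⟨n - 1, by omega⟩ : Fin n) then 1 else 0 := by
      funext q
      have := q.isLt
      simp only [xmask, Fin.ext_iff]
      by_cases h : q.val = n - 1
      · rw [if_pos (by omega), if_pos h]
      · rw [if_neg (by omega), if_neg h]
    rw [← h0, ← h1]
    exact key
  · intro i
    have hi := i.isLt
    show Pmask n (xmask n i.val) * gate n i = gate n i * Pmask n (xmask n (i.val + 1))
    unfold gate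
    rw [pmask_mul_cnot _ _ (gate_ne i)]
    refine congrArg _ (congrArg (Pmask n) ?_)
    show Function.update (xmask n i.val) ⟨i.1, _⟩
        (xmask n i.val ⟨i.1, _⟩ + xmask n i.val ⟨i.1 + 1, _⟩) = xmask n (i.val + 1)
    have v1 : xmask n i.val ⟨i.1, by omega⟩ = 1 := by simp [xmask]
    have v2 : xmask n i.val ⟨i.1 + 1, by omega⟩ = 1 := by simp [xmask]
    rw [v1, v2]
    funext q
    rw [Function.update_apply]
    by_cases hq : q = (⟨i.1, by omega⟩ : Fin n)
    · have hqv : q.val = i.val := by rw [hq]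
      rw [if_pos hq, xmask, if_neg (by omega)]
      decide
    · have hqv : q.val ≠ i.val := fun hc => hq (Fin.ext hc)
      rw [if_neg hq]
      unfold xmask
      by_cases h1 : i.val ≤ q.val
      · rw [if_pos h1, if_pos (by omega)]
      · rw [if_neg h1, if_neg (by omega)]

end Aux5
section Aux6
open Matrix Complex

variable {n : ℕ}

theorem onQubit_mul (A B : Matrix (Fin 2) (Fin 2) ℂ) (i : Fin n) :
    onQubit n A i * onQubit n B i = onQubit n (A * B) i := by
  unfold onQubit
  rw [kron_mul]
  refine congrArg (kronFam n) (funext fun j => ?_)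
  by_cases h : j = i <;> simp [h]

theorem onQubit_comm (A B : Matrix (Fin 2) (Fin 2) ℂ) {i i' : Fin n} (h : i ≠ i') :
    onQubit n A i * onQubit n B i' = onQubit n B i' * onQubit n A i := by
  unfold onQubit
  rw [kron_mul, kron_mul]
  refine congrArg (kronFam n) (funext fun j => ?_)
  by_cases h1 : j = i
  · subst h1; rw [if_neg h, if_pos rfl, mul_one, one_mul]
  · by_cases h2 : j = i' <;> simp [h1, h2, Ne.symm h]

theorem Xg_mul_Hg : Xg * Hg = Hg * Zg := by
  unfold Xg Hg Zg
  rw [Matrix.mul_smul, Matrix.smul_mul]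
  congr 1
  ext i j
  fin_cases i <;> fin_cases j <;>
    simp [Matrix.mul_apply, Fin.sum_univ_two]

theorem Zdiag_zero : Zdiag n 0 = 1 := by
  unfold Zdiag
  have : chi n 0 = fun _ => 1 := by
    funext v
    unfold chi
    refine Finset.prod_eq_one (fun j _ => ?_)
    show ((-1 : ℂ)) ^ (((0 : Fin 2) * v j)).val = 1
    rw [zero_mul]
    rfl
  rw [this]
  exact Matrix.diagonal_one

theorem zdiag_pow (b : Fin n → Fin 2) (e : Fin 2) :
    Zdiag n b ^ (e.val) = Zdiag n (fun q => e * b q) := by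
  match e with
  | (0 : Fin 2) =>
    show Zdiag n b ^ (0 : ℕ) = _
    rw [pow_zero]
    have h0 : (fun q => (0 : Fin 2) * b q) = (0 : Fin n → Fin 2) := by
      funext q; rw [zero_mul]; rfl
    rw [h0, Zdiag_zero]
  | (1 : Fin 2) =>
    show Zdiag n b ^ (1 : ℕ) = _
    rw [pow_one]
    exact congrArg (Zdiag n) (funext fun q => (one_mul (b q)).symm)

theorem onQubitZ_pow (i : Fin n) (e : Fin 2) :
    onQubit n Zg i ^ (e.val) = Zdiag n (fun q => if q.val = i.val then e else 0) := by
  rw [onQubit_Z_eq, sgl_eq, zdiag_pow]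
  refine congrArg (Zdiag n) (funext fun q => ?_)
  by_cases h : q.val = i.val <;> simp [h]

theorem prod_zdiag : ∀ ms : List (Fin n → Fin 2), (ms.map (Zdiag n)).prod = Zdiag n ms.sum
  | [] => by simp [Zdiag_zero]
  | (a :: ms) => by
      rw [List.map_cons, List.prod_cons, prod_zdiag ms, Zdiag_mul, List.sum_cons]

theorem swap3 {a s b y : QMat n} (h : a * s = s * b) : a * (s * y) = s * (b * y) := by
  rw [← mul_assoc, h, mul_assoc]

theorem Ug_push (hn : 0 < n) (g : Fin n → Fin 2) :
    Ug n hn g * (Sn n * onQubit n Hg ⟨n - 1, by omega⟩) =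
      (Sn n * onQubit n Hg ⟨n - 1, by omega⟩) * Zdiag n g := by
  set last : Fin n := ⟨n - 1, by omega⟩ with hlast
  set L := List.finRange (n - 1) with hL
  set e : Fin (n - 1) → ℕ := fun j => ((g (Fin.castLE (Nat.sub_le n 1) j)).val) with he
  set HL := onQubit n Hg last with hHL
  set ZZP := (L.map (fun j => ZZ n j ^ e j)).prod with hZZP
  set ZZP' := (L.map (fun j => onQubit n Zg ⟨j.1, by have := j.isLt; omega⟩ ^ e j)).prod with hZZP'
  set XP := XXn n ^ ((g last).val) with hXP
  set XL := (onQubit n Xg last) ^ ((g last).val) with hXL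
  set ZL := (onQubit n Zg last) ^ ((g last).val) with hZL
  have h1 : ZZP * Sn n = Sn n * ZZP' :=
    prod_comm_push (Sn n) _ _ L (fun j _ => pow_push _ _ _ (ZZ_push j) (e j))
  have h2 : XP * Sn n = Sn n * XL := pow_push _ _ _ (XX_push hn) _
  have h3 : XL * HL = HL * ZL := by
    refine pow_push _ _ _ ?_ _
    rw [hHL, onQubit_mul, onQubit_mul, Xg_mul_Hg]
  have h4 : ZZP' * HL = HL * ZZP' := by
    refine prod_comm_push HL _ _ L (fun j _ => pow_push _ _ _ ?_ (e j))
    refine onQubit_comm Zg Hg (fun hc => ?_)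
    have hj := j.isLt
    have hv : (j.1 : ℕ) = n - 1 := congrArg Fin.val hc
    omega
  have h5 : ZZP' * ZL = Zdiag n g := by
    have hm : ∀ j ∈ L, (onQubit n Zg (⟨j.1, by have := j.isLt; omega⟩ : Fin n) ^ e j) =
        Zdiag n (fun q => if q.val = j.val then g (Fin.castLE (Nat.sub_le n 1) j) else 0) := by
      intro j _
      rw [he, onQubitZ_pow]
    have hZLd : ZL = Zdiag n (fun q => if q.val = last.val then g last else 0) := by
      rw [hZL, onQubitZ_pow]
    rw [hZZP', List.map_congr_left hm, hZLd]
    have this2 : (L.map (fun a => Zdiag n (fun q : Fin n =>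
        if q.val = a.val then g (Fin.castLE (Nat.sub_le n 1) a) else 0))).prod =
        Zdiag n (L.map (fun a : Fin (n - 1) => (fun q : Fin n =>
          if q.val = a.val then g (Fin.castLE (Nat.sub_le n 1) a) else 0))).sum := by
      rw [show (L.map (fun a : Fin (n - 1) => Zdiag n (fun q : Fin n =>
          if q.val = a.val then g (Fin.castLE (Nat.sub_le n 1) a) else 0))) =
          (L.map (fun a : Fin (n - 1) => (fun q : Fin n =>
          if q.val = a.val then g (Fin.castLE (Nat.sub_le n 1) a) else 0))).map (Zdiag n) by
        rw [List.map_map]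
        exact List.map_congr_left fun a _ => rfl]
      exact prod_zdiag _
    rw [this2, Zdiag_mul]
    refine congrArg (Zdiag n) (funext fun q => ?_)
    have hq := q.isLt
    have hsum : (L.map (fun a : Fin (n - 1) => (fun q : Fin n =>
        if q.val = a.val then g (Fin.castLE (Nat.sub_le n 1) a) else 0))).sum =
        ∑ j : Fin (n - 1), (fun q : Fin n =>
          if q.val = j.val then g (Fin.castLE (Nat.sub_le n 1) j) else 0) :=
      (Fin.sum_univ_def _).symm
    rw [Pi.add_apply, hsum, Finset.sum_apply]
    by_cases hql : q.val = n - 1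
    · have hz : ∀ j : Fin (n - 1),
          (if q.val = j.val then g (Fin.castLE (Nat.sub_le n 1) j) else 0) = 0 := by
        intro j
        have := j.isLt
        rw [if_neg (by omega)]
      have hqlast : q = last := Fin.ext hql
      rw [Finset.sum_congr rfl (fun j _ => hz j), Finset.sum_const, smul_zero, zero_add,
        hqlast, if_pos rfl]
    · have hq2 : q.val < n - 1 := by omega
      have hpick : ∑ j : Fin (n - 1),
          (if q.val = j.val then g (Fin.castLE (Nat.sub_le n 1) j) else 0) = g q := by
        rw [Finset.sum_eq_single (⟨q.val, hq2⟩ : Fin (n - 1))]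
        · rw [if_pos rfl]
          exact congrArg g (Fin.ext rfl)
        · intro j _ hj
          rw [if_neg (fun hc => hj (Fin.ext hc.symm))]
        · intro hc
          exact absurd (Finset.mem_univ _) hc
      have hne : ¬ q.val = last.val := hql
      rw [hpick, if_neg hne, add_zero]
  show ZZP * XP * (Sn n * HL) = (Sn n * HL) * Zdiag n g
  calc ZZP * XP * (Sn n * HL)
      = ZZP * (XP * (Sn n * HL)) := by rw [mul_assoc]
    _ = ZZP * (Sn n * (XL * HL)) := by rw [swap3 h2]
    _ = ZZP * (Sn n * (HL * ZL)) := by rw [h3]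
    _ = Sn n * (ZZP' * (HL * ZL)) := by rw [swap3 h1]
    _ = Sn n * (HL * (ZZP' * ZL)) := by rw [swap3 h4]
    _ = Sn n * (HL * Zdiag n g) := by rw [h5]
    _ = (Sn n * HL) * Zdiag n g := by rw [mul_assoc]

end Aux6
section Aux7
open Matrix Complex

variable {n : ℕ}

theorem mulVec_ket (A : QMat n) (z : Fin n → Fin 2) :
    A.mulVec (ket n z) = fun v => A v z := by
  funext v
  simp only [Matrix.mulVec, dotProduct, ket, mul_ite, mul_one, mul_zero]
  rw [Finset.sum_ite_eq' Finset.univ z (fun w => A v w)]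
  simp

theorem hg_col : ∀ a b : Fin 2,
    ((-1 : ℂ)) ^ (((b * a) : Fin 2)).val * Hg a 0 = Hg a b := by
  intro a b
  fin_cases a <;> fin_cases b <;> simp [Hg] <;> try ring

theorem HH_col (g x : Fin n → Fin 2) :
    chi n g x * kronFam n (fun _ => Hg) x (fun _ => 0) = kronFam n (fun _ => Hg) x g := by
  unfold chi kronFam
  rw [← Finset.prod_mul_distrib]
  exact Finset.prod_congr rfl (fun j _ => hg_col (x j) (g j))

theorem col_lift (g : Fin n → Fin 2) (B : QMat n) (v : Fin n → Fin 2) :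
    (B * (Zdiag n g * kronFam n (fun _ => Hg))) v (fun _ => 0) =
      (B * kronFam n (fun _ => Hg)) v g := by
  rw [Matrix.mul_apply, Matrix.mul_apply]
  refine Finset.sum_congr rfl (fun x _ => ?_)
  unfold Zdiag
  rw [Matrix.diagonal_mul, HH_col]

theorem M_formula (hn : 0 < n) (d : (Fin n → Fin 2) → ℂ) :
    (fun v g => ((Ug n hn g).mulVec
        ((Sn n * onQubit n Hg ⟨n - 1, by omega⟩ * Matrix.diagonal d *
          kronFam n (fun _ => Hg)).mulVec (ket n (fun _ => 0)))) v) =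
      Sn n * onQubit n Hg ⟨n - 1, by omega⟩ * Matrix.diagonal d * kronFam n (fun _ => Hg) := by
  funext v g
  rw [Matrix.mulVec_mulVec]
  set C := Sn n * onQubit n Hg ⟨n - 1, by omega⟩ with hC
  have hcomm : Zdiag n g * Matrix.diagonal d = Matrix.diagonal d * Zdiag n g := by
    unfold Zdiag
    rw [Matrix.diagonal_mul_diagonal, Matrix.diagonal_mul_diagonal]
    exact congrArg Matrix.diagonal (funext fun x => mul_comm _ _)
  have key : Ug n hn g * (C * (Matrix.diagonal d * kronFam n (fun _ => Hg))) =
      (C * Matrix.diagonal d) * (Zdiag n g * kronFam n (fun _ => Hg)) :=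
    calc Ug n hn g * (C * (Matrix.diagonal d * kronFam n (fun _ => Hg)))
        = C * (Zdiag n g * (Matrix.diagonal d * kronFam n (fun _ => Hg))) :=
          swap3 (Ug_push hn g)
      _ = C * ((Zdiag n g * Matrix.diagonal d) * kronFam n (fun _ => Hg)) := by
          rw [mul_assoc (Zdiag n g) (Matrix.diagonal d)]
      _ = C * ((Matrix.diagonal d * Zdiag n g) * kronFam n (fun _ => Hg)) := by
          rw [hcomm]
      _ = (C * Matrix.diagonal d) * (Zdiag n g * kronFam n (fun _ => Hg)) := by
          rw [mul_assoc (Matrix.diagonal d) (Zdiag n g),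
            ← mul_assoc C (Matrix.diagonal d) (Zdiag n g * kronFam n (fun _ => Hg))]
  have assoc1 : C * Matrix.diagonal d * kronFam n (fun _ => Hg) =
      C * (Matrix.diagonal d * kronFam n (fun _ => Hg)) := by rw [mul_assoc]
  rw [assoc1, key]
  have hket := congrFun (mulVec_ket ((C * Matrix.diagonal d) *
    (Zdiag n g * kronFam n (fun _ => Hg))) (fun _ => 0)) v
  rw [hket, col_lift g (C * Matrix.diagonal d) v, mul_assoc]

end Aux7
section Aux8
open Matrix Complex

variable {n : ℕ}

/-- fourth roots of unity -/
def IsP4 (c : ℂ) : Prop := c = 1 ∨ c = -1 ∨ c = Complex.I ∨ c = -Complex.I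

theorem IsP4.one : IsP4 (1 : ℂ) := Or.inl rfl

theorem IsP4.mul {a b : ℂ} (ha : IsP4 a) (hb : IsP4 b) : IsP4 (a * b) := by
  rcases ha with h | h | h | h <;> rcases hb with h' | h' | h' | h' <;>
    subst h <;> subst h' <;>
    simp [IsP4, Complex.I_mul_I] <;> ring_nf <;>
    simp [Complex.I_sq] <;> tauto

theorem IsP4.prod (c : Fin n → ℂ) (h : ∀ j, IsP4 (c j)) : IsP4 (∏ j, c j) :=
  Finset.prod_induction c IsP4 (fun _ _ => IsP4.mul) IsP4.one (fun j _ => h j)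

theorem onQubit_smul (c : ℂ) (A : Matrix (Fin 2) (Fin 2) ℂ) (i : Fin n) :
    onQubit n (c • A) i = c • onQubit n A i := by
  unfold onQubit
  have h : (fun j => if j = i then c • A else (1 : Matrix (Fin 2) (Fin 2) ℂ)) =
      (fun j => (if j = i then c else 1) • (if j = i then A else 1)) := by
    funext j
    by_cases hj : j = i <;> simp [hj]
  rw [h, kron_smul]
  congr 1
  rw [Finset.prod_ite_eq' Finset.univ i (fun _ => c)]
  simp

theorem onQubit_one (i : Fin n) : onQubit n 1 i = 1 := by
  unfold onQubit
  rw [show (fun j : Fin n => if j = i then (1 : Matrix (Fin 2) (Fin 2) ℂ) else 1) =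
    (fun _ => 1) by funext j; simp, kron_one]

theorem onQubit_memPS (A : Matrix (Fin 2) (Fin 2) ℂ)
    (hA : A = 1 ∨ A = Xg ∨ A = Yg ∨ A = Zg) (i : Fin n) :
    onQubit n A i ∈ PauliSet n := by
  refine ⟨fun j => if j = i then A else 1, fun j => ?_, rfl⟩
  by_cases hj : j = i <;> simp [hj] <;> tauto

theorem smul_one_mul' (c : ℂ) (M : QMat n) : (c • (1 : QMat n)) * M = c • M := by
  rw [smul_mul_assoc, one_mul]

theorem ZgXgZgXg : Zg * Xg * Zg * Xg = (-1 : ℂ) • (1 : Matrix (Fin 2) (Fin 2) ℂ) := by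
  ext i j
  fin_cases i <;> fin_cases j <;>
    simp [Zg, Xg, Matrix.mul_apply, Fin.sum_univ_two, Matrix.one_apply]

theorem XgYgZg : Xg * Yg * Zg = Complex.I • (1 : Matrix (Fin 2) (Fin 2) ℂ) := by
  ext i j
  fin_cases i <;> fin_cases j <;>
    simp [Zg, Xg, Yg, Matrix.mul_apply, Fin.sum_univ_two, Matrix.one_apply]

theorem neg_one_smul_mem (hn : 0 < n) : (-1 : ℂ) • (1 : QMat n) ∈ PauliGroup n := by
  set i0 : Fin n := ⟨0, hn⟩
  have key : onQubit n Zg i0 * onQubit n Xg i0 * onQubit n Zg i0 * onQubit n Xg i0 =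
      (-1 : ℂ) • (1 : QMat n) := by
    rw [onQubit_mul, onQubit_mul, onQubit_mul, ZgXgZgXg, onQubit_smul, onQubit_one]
  rw [← key]
  have hZ := Submonoid.subset_closure (onQubit_memPS Zg (by tauto) i0)
  have hX := Submonoid.subset_closure (onQubit_memPS Xg (by tauto) i0)
  exact mul_mem (mul_mem (mul_mem hZ hX) hZ) hX

theorem I_smul_mem (hn : 0 < n) : (Complex.I : ℂ) • (1 : QMat n) ∈ PauliGroup n := by
  set i0 : Fin n := ⟨0, hn⟩
  have key : onQubit n Xg i0 * onQubit n Yg i0 * onQubit n Zg i0 =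
      Complex.I • (1 : QMat n) := by
    rw [onQubit_mul, onQubit_mul, XgYgZg, onQubit_smul, onQubit_one]
  rw [← key]
  have hX := Submonoid.subset_closure (onQubit_memPS Xg (by tauto) i0)
  have hY := Submonoid.subset_closure (onQubit_memPS Yg (by tauto) i0)
  have hZ := Submonoid.subset_closure (onQubit_memPS Zg (by tauto) i0)
  exact mul_mem (mul_mem hX hY) hZ

theorem smul_mem_pg (hn : 0 < n) {c : ℂ} (hc : IsP4 c) {P : QMat n}
    (hP : P ∈ PauliGroup n) : c • P ∈ PauliGroup n := by
  have hone : ∀ c : ℂ, IsP4 c → c • (1 : QMat n) ∈ PauliGroup n := by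
    intro c hc
    rcases hc with h | h | h | h <;> subst h
    · rw [one_smul]; exact one_mem _
    · exact neg_one_smul_mem hn
    · exact I_smul_mem hn
    · have : (-Complex.I : ℂ) • (1 : QMat n) =
          ((-1 : ℂ) • (1 : QMat n)) * ((Complex.I : ℂ) • (1 : QMat n)) := by
        rw [smul_one_mul', smul_smul]
        norm_num
      rw [this]
      exact mul_mem (neg_one_smul_mem hn) (I_smul_mem hn)
  rw [show c • P = (c • (1 : QMat n)) * P from by rw [smul_one_mul']]
  exact mul_mem (hone c hc) hP

theorem pmask_memPS (a : Fin n → Fin 2) : Pmask n a ∈ PauliSet n := by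
  refine ⟨fun j => Xg ^ ((a j)).val, fun j => ?_, (kron_X a).symm⟩
  rcases (by decide : ∀ x : Fin 2, x = 0 ∨ x = 1) (a j) with h | h
  · left; show Xg ^ ((a j)).val = 1; rw [h]; exact pow_zero Xg
  · right; left; show Xg ^ ((a j)).val = Xg; rw [h]; exact pow_one Xg

theorem zdiag_memPS (b : Fin n → Fin 2) : Zdiag n b ∈ PauliSet n := by
  refine ⟨fun j => Zg ^ ((b j)).val, fun j => ?_, (kron_Z b).symm⟩
  rcases (by decide : ∀ x : Fin 2, x = 0 ∨ x = 1) (b j) with h | h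
  · left; show Zg ^ ((b j)).val = 1; rw [h]; exact pow_zero Zg
  · right; right; right; show Zg ^ ((b j)).val = Zg; rw [h]; exact pow_one Zg

/-- every Pauli-set element is a 4th root of unity times an `X`-mask times a `Z`-mask. -/
theorem pauliset_decomp {P : QMat n} (hP : P ∈ PauliSet n) :
    ∃ (c : ℂ) (a b : Fin n → Fin 2), IsP4 c ∧ P = c • (Pmask n a * Zdiag n b) := by
  obtain ⟨A, hA, rfl⟩ := hP
  have h1 : ∀ j, ∃ (c : ℂ) (a b : Fin 2), IsP4 c ∧ A j = c • (Xg ^ a.val * Zg ^ b.val) := by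
    intro j
    rcases hA j with h | h | h | h
    · exact ⟨1, 0, 0, IsP4.one, by simp [h]⟩
    · refine ⟨1, 1, 0, IsP4.one, ?_⟩
      rw [h]
      show Xg = (1 : ℂ) • (Xg ^ 1 * Zg ^ 0)
      simp
    · refine ⟨Complex.I, 1, 1, by right; right; left; rfl, ?_⟩
      rw [h]
      show Yg = Complex.I • (Xg ^ 1 * Zg ^ 1)
      rw [pow_one, pow_one]
      ext i j
      fin_cases i <;> fin_cases j <;>
        simp [Xg, Yg, Zg, Matrix.mul_apply, Fin.sum_univ_two]
    · refine ⟨1, 0, 1, IsP4.one, ?_⟩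
      rw [h]
      show Zg = (1 : ℂ) • (Xg ^ 0 * Zg ^ 1)
      simp
  choose c a b hc hAeq using h1
  refine ⟨∏ j, c j, a, b, IsP4.prod c hc, ?_⟩
  rw [← kron_X a, ← kron_Z b, kron_mul, ← kron_smul]
  exact congrArg (kronFam n) (funext fun j => hAeq j)

end Aux8
section Aux9
open Matrix Complex

variable {n : ℕ}

theorem sqrt2_sq : ((((Real.sqrt 2)⁻¹ : ℝ)) : ℂ) * ((((Real.sqrt 2)⁻¹ : ℝ)) : ℂ) = 1 / 2 := by
  rw [← Complex.ofReal_mul, ← mul_inv, Real.mul_self_sqrt (by norm_num)]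
  norm_num

theorem Hg_herm : Hgᴴ = Hg := by
  ext i j
  fin_cases i <;> fin_cases j <;>
    simp [Hg, Matrix.conjTranspose_apply, Complex.conj_ofReal]

theorem hconj_calc (A B : Matrix (Fin 2) (Fin 2) ℂ)
    (h : !![1, 1; 1, -1] * A * !![1, 1; 1, -1] = (2 : ℂ) • B) : Hg * A * Hg = B := by
  unfold Hg
  rw [Matrix.smul_mul, Matrix.mul_smul, Matrix.smul_mul, smul_smul, h, smul_smul, sqrt2_sq]
  norm_num

theorem Hg_mul_Hg : Hg * Hg = 1 := by
  have := hconj_calc 1 1 (by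
    ext i j
    fin_cases i <;> fin_cases j <;>
      simp [Matrix.mul_apply, Fin.sum_univ_two, Matrix.one_apply] <;> norm_num)
  rw [← this, mul_one]

theorem HXH : Hg * Xg * Hg = Zg := by
  refine hconj_calc Xg Zg ?_
  ext i j
  fin_cases i <;> fin_cases j <;>
    simp [Xg, Zg, Matrix.mul_apply, Fin.sum_univ_two] <;> norm_num

theorem HZH : Hg * Zg * Hg = Xg := by
  refine hconj_calc Zg Xg ?_
  ext i j
  fin_cases i <;> fin_cases j <;>
    simp [Xg, Zg, Matrix.mul_apply, Fin.sum_univ_two] <;> norm_num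

theorem HYH : Hg * Yg * Hg = (-1 : ℂ) • Yg := by
  refine hconj_calc Yg ((-1 : ℂ) • Yg) ?_
  ext i j
  fin_cases i <;> fin_cases j <;>
    simp [Yg, Matrix.mul_apply, Fin.sum_univ_two] <;> ring

theorem hg_conj_dec (A : Matrix (Fin 2) (Fin 2) ℂ)
    (hA : A = 1 ∨ A = Xg ∨ A = Yg ∨ A = Zg) :
    ∃ (c : ℂ) (B : Matrix (Fin 2) (Fin 2) ℂ), IsP4 c ∧
      (B = 1 ∨ B = Xg ∨ B = Yg ∨ B = Zg) ∧ Hg * A * Hg = c • B := by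
  rcases hA with h | h | h | h <;> subst h
  · exact ⟨1, 1, IsP4.one, by tauto, by rw [mul_one, Hg_mul_Hg, one_smul]⟩
  · exact ⟨1, Zg, IsP4.one, by tauto, by rw [HXH, one_smul]⟩
  · exact ⟨-1, Yg, by right; left; rfl, by tauto, HYH⟩
  · exact ⟨1, Xg, IsP4.one, by tauto, by rw [HZH, one_smul]⟩

theorem scaled_kron_mem (hn : 0 < n) (F : Fin n → Matrix (Fin 2) (Fin 2) ℂ)
    (h : ∀ j, ∃ (c : ℂ) (B : Matrix (Fin 2) (Fin 2) ℂ), IsP4 c ∧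
      (B = 1 ∨ B = Xg ∨ B = Yg ∨ B = Zg) ∧ F j = c • B) :
    kronFam n F ∈ PauliGroup n := by
  choose c B hc hB hF using h
  rw [show F = fun j => c j • B j from funext hF, kron_smul]
  exact smul_mem_pg hn (IsP4.prod c hc) (Submonoid.subset_closure ⟨B, hB, rfl⟩)

/-- conjugation by a unitary preserving the generators preserves the Pauli group -/
theorem conj_closure (V : QMat n) (hV : V ∈ Matrix.unitaryGroup (Fin n → Fin 2) ℂ)
    (hgen : ∀ P ∈ PauliSet n, V * P * Vᴴ ∈ PauliGroup n) :
    ∀ P ∈ PauliGroup n, V * P * Vᴴ ∈ PauliGroup n := by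
  have hVV : V * Vᴴ = 1 := by
    rw [← Matrix.star_eq_conjTranspose]
    exact Matrix.mem_unitaryGroup_iff.mp hV
  have hVV' : Vᴴ * V = 1 := by
    rw [← Matrix.star_eq_conjTranspose]
    exact Matrix.mem_unitaryGroup_iff'.mp hV
  intro P hP
  induction hP using Submonoid.closure_induction with
  | mem x hx => exact hgen x hx
  | one => rw [mul_one, hVV]; exact one_mem _
  | mul x y _ _ hx hy =>
      have : V * (x * y) * Vᴴ = (V * x * Vᴴ) * (V * y * Vᴴ) := by
        calc V * (x * y) * Vᴴ = V * (x * (Vᴴ * V) * y) * Vᴴ := by rw [hVV', mul_one]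
        _ = (V * x * Vᴴ) * (V * y * Vᴴ) := by simp only [mul_assoc]
      rw [this]
      exact mul_mem hx hy

theorem kron_unitary (A : Fin n → Matrix (Fin 2) (Fin 2) ℂ)
    (h : ∀ j, A j * (A j)ᴴ = 1) :
    kronFam n A ∈ Matrix.unitaryGroup (Fin n → Fin 2) ℂ := by
  rw [Matrix.mem_unitaryGroup_iff, Matrix.star_eq_conjTranspose, kron_conjT, kron_mul]
  rw [show (fun j => A j * (A j)ᴴ) = (fun _ => (1 : Matrix (Fin 2) (Fin 2) ℂ)) from
    funext h, kron_one]

theorem hadfam_herm (E : Fin n → Matrix (Fin 2) (Fin 2) ℂ)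
    (hE : ∀ j, E j = Hg ∨ E j = 1) : (kronFam n E)ᴴ = kronFam n E := by
  rw [kron_conjT]
  refine congrArg (kronFam n) (funext fun j => ?_)
  rcases hE j with h | h <;> rw [h] <;> simp [Hg_herm]

theorem hadfam_unitary (E : Fin n → Matrix (Fin 2) (Fin 2) ℂ)
    (hE : ∀ j, E j = Hg ∨ E j = 1) :
    kronFam n E ∈ Matrix.unitaryGroup (Fin n → Fin 2) ℂ := by
  refine kron_unitary E (fun j => ?_)
  rcases hE j with h | h <;> rw [h] <;> simp [Hg_herm, Hg_mul_Hg]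

theorem hadfam_conj (hn : 0 < n) (E : Fin n → Matrix (Fin 2) (Fin 2) ℂ)
    (hE : ∀ j, E j = Hg ∨ E j = 1) :
    ∀ P ∈ PauliGroup n, kronFam n E * P * (kronFam n E)ᴴ ∈ PauliGroup n := by
  refine conj_closure _ (hadfam_unitary E hE) ?_
  intro P hP
  obtain ⟨A, hA, rfl⟩ := hP
  rw [hadfam_herm E hE, kron_mul, kron_mul]
  refine scaled_kron_mem hn _ (fun j => ?_)
  rcases hE j with h | h
  · rw [h]
    exact hg_conj_dec (A j) (hA j)
  · rw [h]
    exact ⟨1, A j, IsP4.one, hA j, by rw [one_mul, mul_one, one_smul]⟩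

theorem cnot_unitary (c t : Fin n) (hct : c ≠ t) :
    CNOT n c t ∈ Matrix.unitaryGroup (Fin n → Fin 2) ℂ := by
  rw [Matrix.mem_unitaryGroup_iff, Matrix.star_eq_conjTranspose, cnot_conjT c t hct,
    cnot_mul_cnot c t hct]

theorem cnot_conj_pg (hn : 0 < n) (c t : Fin n) (hct : c ≠ t) :
    ∀ P ∈ PauliGroup n, CNOT n c t * P * (CNOT n c t)ᴴ ∈ PauliGroup n := by
  refine conj_closure _ (cnot_unitary c t hct) ?_
  intro P hP
  obtain ⟨cc, a, b, hcc, rfl⟩ := pauliset_decomp hP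
  rw [cnot_conjT c t hct, Matrix.mul_smul, Matrix.smul_mul]
  have hsplit : CNOT n c t * (Pmask n a * Zdiag n b) * CNOT n c t =
      (CNOT n c t * Pmask n a * CNOT n c t) * (CNOT n c t * Zdiag n b * CNOT n c t) := by
    calc CNOT n c t * (Pmask n a * Zdiag n b) * CNOT n c t
        = CNOT n c t * Pmask n a * (Zdiag n b * CNOT n c t) := by
          simp only [mul_assoc]
      _ = CNOT n c t * Pmask n a * ((CNOT n c t * CNOT n c t) * (Zdiag n b * CNOT n c t)) := by
          rw [cnot_mul_cnot c t hct, one_mul]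
      _ = (CNOT n c t * Pmask n a * CNOT n c t) * (CNOT n c t * Zdiag n b * CNOT n c t) := by
          simp only [mul_assoc]
  rw [hsplit, cnot_conj_pmask c t hct, cnot_conj_zdiag c t hct]
  exact smul_mem_pg hn hcc (mul_mem (Submonoid.subset_closure (pmask_memPS _))
    (Submonoid.subset_closure (zdiag_memPS _)))

theorem list_prod_unitary (L : List (QMat n))
    (h : ∀ W ∈ L, W ∈ Matrix.unitaryGroup (Fin n → Fin 2) ℂ) :
    L.prod ∈ Matrix.unitaryGroup (Fin n → Fin 2) ℂ :=
  Submonoid.list_prod_mem _ h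

theorem conj_list : ∀ L : List (QMat n),
    (∀ W ∈ L, W ∈ Matrix.unitaryGroup (Fin n → Fin 2) ℂ ∧
      (∀ P ∈ PauliGroup n, W * P * Wᴴ ∈ PauliGroup n)) →
    ∀ P ∈ PauliGroup n, L.prod * P * (L.prod)ᴴ ∈ PauliGroup n
  | [], _, P, hP => by
      rw [List.prod_nil, Matrix.conjTranspose_one, one_mul, mul_one]
      exact hP
  | (W :: L), h, P, hP => by
      rw [List.prod_cons, Matrix.conjTranspose_mul]
      have hW := h W List.mem_cons_self
      have hL := conj_list L (fun W' hW' => h W' (List.mem_cons_of_mem W hW')) P hP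
      have heq : W * L.prod * P * ((L.prod)ᴴ * Wᴴ) =
          W * (L.prod * P * (L.prod)ᴴ) * Wᴴ := by
        simp only [mul_assoc]
      rw [heq]
      exact hW.2 _ hL

theorem sn_gates_mem (W : QMat n)
    (hW : W ∈ (List.finRange (n - 1)).map (gate n)) :
    W ∈ Matrix.unitaryGroup (Fin n → Fin 2) ℂ ∧
      (0 < n → ∀ P ∈ PauliGroup n, W * P * Wᴴ ∈ PauliGroup n) := by
  obtain ⟨i, _, rfl⟩ := List.mem_map.mp hW
  unfold gate
  exact ⟨cnot_unitary _ _ (gate_ne i), fun hn => cnot_conj_pg hn _ _ (gate_ne i)⟩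

theorem sn_unitary : Sn n ∈ Matrix.unitaryGroup (Fin n → Fin 2) ℂ := by
  rw [Sn_eq]
  exact list_prod_unitary _ (fun W hW => (sn_gates_mem W hW).1)

theorem sn_conj_pg (hn : 0 < n) :
    ∀ P ∈ PauliGroup n, Sn n * P * (Sn n)ᴴ ∈ PauliGroup n := by
  rw [Sn_eq]
  exact conj_list _ (fun W hW => ⟨(sn_gates_mem W hW).1, (sn_gates_mem W hW).2 hn⟩)

theorem snH_conj_pg (hn : 0 < n) :
    ∀ P ∈ PauliGroup n, (Sn n)ᴴ * P * Sn n ∈ PauliGroup n := by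
  intro P hP
  have hrev : (Sn n)ᴴ =
      (((List.finRange (n - 1)).map (gate n)).map Matrix.conjTranspose).reverse.prod := by
    rw [Sn_eq, Matrix.conjTranspose_list_prod]
  have hmem : ∀ W ∈ (((List.finRange (n - 1)).map (gate n)).map Matrix.conjTranspose).reverse,
      W ∈ Matrix.unitaryGroup (Fin n → Fin 2) ℂ ∧
        (∀ P ∈ PauliGroup n, W * P * Wᴴ ∈ PauliGroup n) := by
    intro W hW
    rw [List.mem_reverse, List.mem_map] at hW
    obtain ⟨W', hW', rfl⟩ := hW
    obtain ⟨i, _, rfl⟩ := List.mem_map.mp hW'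
    have hconj : (gate n i)ᴴ = gate n i := by
      unfold gate; exact cnot_conjT _ _ (gate_ne i)
    rw [hconj]
    obtain ⟨h1, h2⟩ := sn_gates_mem (gate n i) (by
      exact List.mem_map.mpr ⟨i, List.mem_finRange i, rfl⟩)
    exact ⟨h1, h2 hn⟩
  have key := conj_list _ hmem P hP
  rw [← hrev] at key
  have hdd : ((Sn n)ᴴ)ᴴ = Sn n := Matrix.conjTranspose_conjTranspose _
  rw [hdd] at key
  exact key

end Aux9
section Aux10
open Matrix Complex

variable {n : ℕ}

theorem clifford_conj (V : QMat n) (hVu : V ∈ Matrix.unitaryGroup (Fin n → Fin 2) ℂ)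
    (h1 : ∀ P ∈ PauliGroup n, V * P * Vᴴ ∈ PauliGroup n)
    (h2 : ∀ P ∈ PauliGroup n, Vᴴ * P * V ∈ PauliGroup n) :
    ∀ (k : ℕ) (U : QMat n), U ∈ Clifford n k → V * U * Vᴴ ∈ Clifford n k := by
  have hVH : Vᴴ ∈ Matrix.unitaryGroup (Fin n → Fin 2) ℂ := by
    have := Unitary.star_mem hVu
    rwa [Matrix.star_eq_conjTranspose] at this
  intro k
  induction k using Nat.strong_induction_on with
  | _ k ih =>
    match k with
    | 0 => exact fun U hU => h1 U hU
    | 1 => exact fun U hU => h1 U hU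
    | (k + 2) =>
      intro U hU
      obtain ⟨hUu, hUP⟩ := hU
      refine ⟨mul_mem (mul_mem hVu hUu) hVH, fun P hP => ?_⟩
      have hPc : Vᴴ * P * V ∈ PauliGroup n := h2 P hP
      have hres := ih (k + 1) (by omega) _ (hUP _ hPc)
      have heq : (V * U * Vᴴ) * P * (V * U * Vᴴ)ᴴ =
          V * (U * (Vᴴ * P * V) * Uᴴ) * Vᴴ := by
        rw [Matrix.conjTranspose_mul, Matrix.conjTranspose_mul,
          Matrix.conjTranspose_conjTranspose]
        simp only [mul_assoc]
      rw [heq]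
      exact hres

theorem clifford_left_mul (m : ℕ) (V U : QMat n)
    (hVu : V ∈ Matrix.unitaryGroup (Fin n → Fin 2) ℂ)
    (h1 : ∀ P ∈ PauliGroup n, V * P * Vᴴ ∈ PauliGroup n)
    (h2 : ∀ P ∈ PauliGroup n, Vᴴ * P * V ∈ PauliGroup n)
    (hU : U ∈ Clifford n (m + 2)) : V * U ∈ Clifford n (m + 2) := by
  obtain ⟨hUu, hUP⟩ := hU
  refine ⟨mul_mem hVu hUu, fun P hP => ?_⟩
  have heq : (V * U) * P * (V * U)ᴴ = V * (U * P * Uᴴ) * Vᴴ := by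
    rw [Matrix.conjTranspose_mul]
    simp only [mul_assoc]
  rw [heq]
  exact clifford_conj V hVu h1 h2 (m + 1) _ (hUP P hP)

theorem clifford_right_mul (m : ℕ) (V U : QMat n)
    (hVu : V ∈ Matrix.unitaryGroup (Fin n → Fin 2) ℂ)
    (h1 : ∀ P ∈ PauliGroup n, V * P * Vᴴ ∈ PauliGroup n)
    (hU : U ∈ Clifford n (m + 2)) : U * V ∈ Clifford n (m + 2) := by
  obtain ⟨hUu, hUP⟩ := hU
  refine ⟨mul_mem hUu hVu, fun P hP => ?_⟩
  have heq : (U * V) * P * (U * V)ᴴ = U * (V * P * Vᴴ) * Uᴴ := by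
    rw [Matrix.conjTranspose_mul]
    simp only [mul_assoc]
  rw [heq]
  exact hUP _ (h1 P hP)

theorem onQubit_as_kron (A : Matrix (Fin 2) (Fin 2) ℂ) (i : Fin n) :
    onQubit n A i = kronFam n (fun j => if j = i then A else 1) := rfl

end Aux10
open scoped Matrix in
/-- If the diagonal unitary `D` lies in level `C_k` (`k ≥ 2`) of the
`n`-qubit Clifford hierarchy, then the measurement unitary `M_ψ = Σ_g U_g |ψ⟩⟨g|` of the
tetrahedral basis with fiducial `ψ = S(n) H⁽ⁿ⁾ D H^{⊗n} |0…0⟩` also lies in `C_k`. -/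
theorem multiqubit_EJM_clifford_level (n k : ℕ) (hn : 2 ≤ n) (hk : 2 ≤ k)
    (D : QMat n)
    (hDdiag : ∃ d : (Fin n → Fin 2) → ℂ, D = Matrix.diagonal d)
    (hDunit : D ∈ Matrix.unitaryGroup (Fin n → Fin 2) ℂ)
    (hDCk : D ∈ Clifford n k)
    (ψ : QVec n)
    (hψ : ψ = (Sn n * onQubit n Hg ⟨n - 1, by omega⟩ * D *
        kronFam n (fun _ => Hg)).mulVec (ket n (fun _ => 0)))
    (M : QMat n)
    (hM : M = fun v g => ((Ug n (by omega) g).mulVec ψ) v) :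
    M ∈ Clifford n k := by
  have hn0 : 0 < n := by omega
  obtain ⟨d, hd⟩ := hDdiag
  -- Part A: the measurement unitary factors through the fiducial circuit
  have hMeq : M = Sn n * onQubit n Hg ⟨n - 1, by omega⟩ * D * kronFam n (fun _ => Hg) := by
    rw [hM, hψ, hd]
    exact M_formula hn0 d
  -- Part B: gate properties
  obtain ⟨m, rfl⟩ : ∃ m, k = m + 2 := ⟨k - 2, by omega⟩
  set last : Fin n := ⟨n - 1, by omega⟩ with hlast
  have hEHL : ∀ j : Fin n, (if j = last then Hg else 1) = Hg ∨
      (if j = last then Hg else (1 : Matrix (Fin 2) (Fin 2) ℂ)) = 1 := by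
    intro j
    by_cases h : j = last <;> simp [h]
  have hEHH : ∀ _j : Fin n, Hg = Hg ∨ Hg = (1 : Matrix (Fin 2) (Fin 2) ℂ) :=
    fun _ => Or.inl rfl
  -- the Hadamard on the last qubit
  have hHLu : onQubit n Hg last ∈ Matrix.unitaryGroup (Fin n → Fin 2) ℂ := by
    rw [onQubit_as_kron]
    exact hadfam_unitary _ hEHL
  have hHLherm : (onQubit n Hg last)ᴴ = onQubit n Hg last := by
    rw [onQubit_as_kron]
    exact hadfam_herm _ hEHL
  have hHLc : ∀ P ∈ PauliGroup n,
      onQubit n Hg last * P * (onQubit n Hg last)ᴴ ∈ PauliGroup n := by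
    rw [onQubit_as_kron]
    exact hadfam_conj hn0 _ hEHL
  have hHLc2 : ∀ P ∈ PauliGroup n,
      (onQubit n Hg last)ᴴ * P * onQubit n Hg last ∈ PauliGroup n := by
    intro P hP
    have h := hHLc P hP
    rw [hHLherm]
    rwa [hHLherm] at h
  -- the Hadamard transversal layer
  have hHHu : kronFam n (fun _ => Hg) ∈ Matrix.unitaryGroup (Fin n → Fin 2) ℂ :=
    hadfam_unitary _ hEHH
  have hHHc : ∀ P ∈ PauliGroup n,
      kronFam n (fun _ => Hg) * P * (kronFam n (fun _ => Hg))ᴴ ∈ PauliGroup n :=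
    hadfam_conj hn0 _ hEHH
  -- assemble
  have step1 : D * kronFam n (fun _ => Hg) ∈ Clifford n (m + 2) :=
    clifford_right_mul m _ D hHHu hHHc hDCk
  have step2 : onQubit n Hg last * (D * kronFam n (fun _ => Hg)) ∈ Clifford n (m + 2) :=
    clifford_left_mul m _ _ hHLu hHLc hHLc2 step1
  have step3 : Sn n * (onQubit n Hg last * (D * kronFam n (fun _ => Hg))) ∈
      Clifford n (m + 2) :=
    clifford_left_mul m _ _ sn_unitary (sn_conj_pg hn0) (snH_conj_pg hn0) step2
  have hassoc : Sn n * onQubit n Hg last * D * kronFam n (fun _ => Hg) =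
      Sn n * (onQubit n Hg last * (D * kronFam n (fun _ => Hg))) := by
    simp only [mul_assoc]
  rw [hMeq, hassoc]
  exact step3
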